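/- arXiv:astro-ph/0605643 — 3 statements merged into one kernel-verified Lean document; each statement's English description precedes it below -/
import Mathlib

section
/- Suppose the input field is an nth-order azimuthal harmonic, E_in(r,θ) = E_i(r) e^{i n θ} for some integer n, and assume the S-Huygens integrand (r,θ) ↦ K(r,r̃) e^{-2πi r r̃ cos(θ-θ̃)/(λ S₀(r,r̃))} E_in(r,θ) A_in(r) r is integrable over (0,∞) × (0,2π) for each r̃ > 0. Then the output field of the S-Huygens propagation is also an nth-order azimuthal harmonic: E_out(r̃,θ̃) = E_o(r̃) e^{i n θ̃}, where E_o(r̃) = (2π (-1)ⁿ i^{n-1} A_out(r̃)/(λ Z)) ∫₀^∞ K(r,r̃) E_i(r) Jₙ(2π r r̃/(λ S₀(r,r̃))) A_in(r) r dr. -/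
open MeasureTheory

/-- The Bessel function of integer order `n`, defined by its integral representation
`Jₙ(x) = (1/(2π iⁿ)) ∫₀^{2π} e^{i x cos θ} e^{i n θ} dθ`. -/
noncomputable def besselJ (n : ℤ) (x : ℝ) : ℂ :=
  (1 / (2 * (Real.pi : ℂ) * Complex.I ^ n)) *
    ∫ θ in (0:ℝ)..(2 * Real.pi),
      Complex.exp (Complex.I * (x : ℂ) * (Real.cos θ : ℂ)) *
        Complex.exp (Complex.I * (n : ℂ) * (θ : ℂ))

/-- The data specifying an S-Huygens propagation step: continuous surface height
functions `h`, `ht`, a wavelength `lam > 0`, a plane separation `Z > 0`, a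
refractive index `nu`, and input/output apodizers `Ain`, `Aout`. -/
structure SHuygensStep where
  h : ℝ → ℝ
  ht : ℝ → ℝ
  h_cont : Continuous h
  ht_cont : Continuous ht
  lam : ℝ
  lam_pos : 0 < lam
  Z : ℝ
  Z_pos : 0 < Z
  nu : ℝ
  Ain : ℝ → ℝ
  Aout : ℝ → ℝ

/-- `S₀(r,r̃) = √((r - r̃)² + (h(r) - h̃(r̃))²)`. -/
noncomputable def S0 (P : SHuygensStep) (r rt : ℝ) : ℝ :=
  Real.sqrt ((r - rt) ^ 2 + (P.h r - P.ht rt) ^ 2)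

/-- `K(r,r̃) = exp(2πi (r r̃/S₀ + S₀ + |ν|(h̃(r̃) - h(r)))/λ)`. -/
noncomputable def Kker (P : SHuygensStep) (r rt : ℝ) : ℂ :=
  Complex.exp (2 * (Real.pi : ℂ) * Complex.I *
    (((r * rt / S0 P r rt + S0 P r rt + |P.nu| * (P.ht rt - P.h r)) / P.lam : ℝ) : ℂ))

/-- The S-Huygens propagation of an input field `Ein` (in polar coordinates):
`E_out(r̃,θ̃) = (A_out(r̃)/(iλZ)) ∫₀^∞ K(r,r̃) [∫₀^{2π} e^{-2πi r r̃ cos(θ-θ̃)/(λ S₀(r,r̃))}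
E_in(r,θ) dθ] A_in(r) r dr`. -/
noncomputable def propagate (P : SHuygensStep) (Ein : ℝ → ℝ → ℂ) (rt θt : ℝ) : ℂ :=
  ((P.Aout rt : ℂ) / (Complex.I * (P.lam : ℂ) * (P.Z : ℂ))) *
    ∫ r in Set.Ioi (0:ℝ),
      Kker P r rt *
        (∫ θ in (0:ℝ)..(2 * Real.pi),
          Complex.exp (-(2 * (Real.pi : ℂ) * Complex.I) *
            ((r * rt * Real.cos (θ - θt) : ℝ) : ℂ) / ((P.lam * S0 P r rt : ℝ) : ℂ)) *
            Ein r θ) *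
        (P.Ain r : ℂ) * (r : ℂ)

lemma periodicG (c : ℝ) (n : ℤ) : Function.Periodic
    (fun θ : ℝ => Complex.exp (Complex.I * (c : ℂ) * (Real.cos θ : ℂ)) *
      Complex.exp (Complex.I * (n : ℂ) * (θ : ℂ))) (2 * Real.pi) := by
  intro θ
  simp only
  rw [Real.cos_add_two_pi,
    show Complex.I * (n : ℂ) * ((θ + 2 * Real.pi : ℝ) : ℂ)
      = Complex.I * n * θ + n * (2 * Real.pi * Complex.I) by push_cast; ring,
    Complex.exp_add, Complex.exp_int_mul_two_pi_mul_I, mul_one]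

lemma inner_integral_eq (x θt : ℝ) (n : ℤ) :
    (∫ θ in (0:ℝ)..(2 * Real.pi),
        Complex.exp (Complex.I * ((-x : ℝ) : ℂ) * ((Real.cos (θ - θt) : ℝ) : ℂ)) *
          Complex.exp (Complex.I * (n : ℂ) * (θ : ℂ)))
      = (2 * (Real.pi : ℂ) * Complex.I ^ n * (-1) ^ n) * besselJ n x *
          Complex.exp (Complex.I * (n : ℂ) * (θt : ℂ)) := by
  set g : ℝ → ℂ := fun θ => Complex.exp (Complex.I * ((-x : ℝ) : ℂ) * (Real.cos θ : ℂ)) *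
      Complex.exp (Complex.I * (n : ℂ) * (θ : ℂ)) with hg
  set G : ℝ → ℂ := fun θ => Complex.exp (Complex.I * (x : ℂ) * (Real.cos θ : ℂ)) *
      Complex.exp (Complex.I * (n : ℂ) * (θ : ℂ)) with hG
  have step1 : (∫ θ in (0:ℝ)..(2 * Real.pi),
        Complex.exp (Complex.I * ((-x : ℝ) : ℂ) * ((Real.cos (θ - θt) : ℝ) : ℂ)) *
          Complex.exp (Complex.I * (n : ℂ) * (θ : ℂ)))
      = (∫ θ in (0:ℝ)..(2 * Real.pi), g θ) * Complex.exp (Complex.I * (n : ℂ) * (θt : ℂ)) := by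
    have : ∀ θ : ℝ, Complex.exp (Complex.I * ((-x : ℝ) : ℂ) * ((Real.cos (θ - θt) : ℝ) : ℂ)) *
          Complex.exp (Complex.I * (n : ℂ) * (θ : ℂ))
        = g (θ - θt) * Complex.exp (Complex.I * (n : ℂ) * (θt : ℂ)) := by
      intro θ
      simp only [hg, ← Complex.exp_add]
      congr 1
      push_cast
      ring
    rw [intervalIntegral.integral_congr (g := fun θ =>
        g (θ - θt) * Complex.exp (Complex.I * (n : ℂ) * (θt : ℂ))) (fun θ _ => this θ),
      intervalIntegral.integral_mul_const, intervalIntegral.integral_comp_sub_right g θt,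
      show (0:ℝ) - θt = -θt by ring, show 2 * Real.pi - θt = -θt + 2 * Real.pi by ring,
      (periodicG (-x) n).intervalIntegral_add_eq (-θt) 0, zero_add]
  have step2 : (∫ θ in (0:ℝ)..(2 * Real.pi), g θ)
      = (∫ θ in (0:ℝ)..(2 * Real.pi), G θ) * Complex.exp (-(Complex.I * (n : ℂ) * (Real.pi : ℂ))) := by
    have : ∀ θ : ℝ, g θ = G (θ + Real.pi) * Complex.exp (-(Complex.I * (n : ℂ) * (Real.pi : ℂ))) := by
      intro θ
      simp only [hg, hG, Real.cos_add_pi, ← Complex.exp_add]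
      congr 1
      push_cast
      ring
    rw [intervalIntegral.integral_congr (g := fun θ =>
        G (θ + Real.pi) * Complex.exp (-(Complex.I * (n : ℂ) * (Real.pi : ℂ)))) (fun θ _ => this θ),
      intervalIntegral.integral_mul_const, intervalIntegral.integral_comp_add_right G Real.pi,
      show (0:ℝ) + Real.pi = Real.pi by ring,
      show 2 * Real.pi + Real.pi = Real.pi + 2 * Real.pi by ring,
      (periodicG x n).intervalIntegral_add_eq Real.pi 0, zero_add]
  have hne : (2 * (Real.pi : ℂ) * Complex.I ^ n) ≠ 0 := by
    apply mul_ne_zero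
    · simp [Real.pi_ne_zero, Complex.ofReal_ne_zero]
    · exact zpow_ne_zero n Complex.I_ne_zero
  have step3 : (∫ θ in (0:ℝ)..(2 * Real.pi), G θ)
      = 2 * (Real.pi : ℂ) * Complex.I ^ n * besselJ n x := by
    rw [besselJ, ← mul_assoc, mul_one_div, div_self hne, one_mul]
  have step4 : Complex.exp (-(Complex.I * (n : ℂ) * (Real.pi : ℂ))) = (-1 : ℂ) ^ n := by
    rw [show -(Complex.I * (n : ℂ) * (Real.pi : ℂ)) = ((-n : ℤ) : ℂ) * (Real.pi * Complex.I) by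
        push_cast; ring,
      Complex.exp_int_mul, Complex.exp_pi_mul_I, zpow_neg]
    refine inv_eq_of_mul_eq_one_right ?_
    rw [← mul_zpow]
    norm_num
  rw [step1, step2, step3, step4]
  ring


/-- If the input field is an `n`th-order azimuthal harmonic
`E_in(r,θ) = E_i(r) e^{i n θ}`, and the S-Huygens integrand is integrable over
`(0,∞) × (0,2π)` for each `r̃ > 0`, then the output field is also an `n`th-order
azimuthal harmonic, `E_out(r̃,θ̃) = E_o(r̃) e^{i n θ̃}`, with radial part
`E_o(r̃) = (2π (-1)ⁿ i^{n-1} A_out(r̃)/(λZ)) ∫₀^∞ K(r,r̃) E_i(r)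
Jₙ(2π r r̃/(λ S₀(r,r̃))) A_in(r) r dr`. -/
theorem sHuygens_azimuthal_harmonic (P : SHuygensStep) (n : ℤ) (Ei : ℝ → ℂ)
    (hint : ∀ rt : ℝ, 0 < rt → ∀ θt : ℝ,
      IntegrableOn
        (fun p : ℝ × ℝ =>
          Kker P p.1 rt *
            (Complex.exp (-(2 * (Real.pi : ℂ) * Complex.I) *
              ((p.1 * rt * Real.cos (p.2 - θt) : ℝ) : ℂ) /
                ((P.lam * S0 P p.1 rt : ℝ) : ℂ)) *
              (Ei p.1 * Complex.exp (Complex.I * (n : ℂ) * (p.2 : ℂ)))) *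
            (P.Ain p.1 : ℂ) * (p.1 : ℂ))
        (Set.Ioi (0:ℝ) ×ˢ Set.Ioo (0:ℝ) (2 * Real.pi))) :
    ∀ rt : ℝ, 0 < rt → ∀ θt : ℝ,
      propagate P (fun r θ => Ei r * Complex.exp (Complex.I * (n : ℂ) * (θ : ℂ))) rt θt =
        (2 * (Real.pi : ℂ) * (-1) ^ n * Complex.I ^ (n - 1) * (P.Aout rt : ℂ) /
            ((P.lam : ℂ) * (P.Z : ℂ))) *
          (∫ r in Set.Ioi (0:ℝ),
            Kker P r rt * Ei r *
              besselJ n (2 * Real.pi * r * rt / (P.lam * S0 P r rt)) *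
              (P.Ain r : ℂ) * (r : ℂ)) *
          Complex.exp (Complex.I * (n : ℂ) * (θt : ℂ)) := by
  intro rt hrt θt
  have hpoint : ∀ r : ℝ,
      Kker P r rt *
        (∫ θ in (0:ℝ)..(2 * Real.pi),
          Complex.exp (-(2 * (Real.pi : ℂ) * Complex.I) *
            ((r * rt * Real.cos (θ - θt) : ℝ) : ℂ) / ((P.lam * S0 P r rt : ℝ) : ℂ)) *
            (Ei r * Complex.exp (Complex.I * (n : ℂ) * (θ : ℂ)))) *
        (P.Ain r : ℂ) * (r : ℂ)
      = (2 * (Real.pi : ℂ) * Complex.I ^ n * (-1) ^ n *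
            Complex.exp (Complex.I * (n : ℂ) * (θt : ℂ))) *
          (Kker P r rt * Ei r *
            besselJ n (2 * Real.pi * r * rt / (P.lam * S0 P r rt)) *
            (P.Ain r : ℂ) * (r : ℂ)) := by
    intro r
    set x : ℝ := 2 * Real.pi * r * rt / (P.lam * S0 P r rt) with hx
    have hexp : ∀ θ : ℝ,
        -(2 * (Real.pi : ℂ) * Complex.I) * ((r * rt * Real.cos (θ - θt) : ℝ) : ℂ) /
            ((P.lam * S0 P r rt : ℝ) : ℂ)
          = Complex.I * ((-x : ℝ) : ℂ) * ((Real.cos (θ - θt) : ℝ) : ℂ) := by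
      intro θ
      rw [hx]
      push_cast
      ring
    have hinner : (∫ θ in (0:ℝ)..(2 * Real.pi),
          Complex.exp (-(2 * (Real.pi : ℂ) * Complex.I) *
            ((r * rt * Real.cos (θ - θt) : ℝ) : ℂ) / ((P.lam * S0 P r rt : ℝ) : ℂ)) *
            (Ei r * Complex.exp (Complex.I * (n : ℂ) * (θ : ℂ))))
        = Ei r * ((2 * (Real.pi : ℂ) * Complex.I ^ n * (-1) ^ n) * besselJ n x *
            Complex.exp (Complex.I * (n : ℂ) * (θt : ℂ))) := by
      rw [← inner_integral_eq x θt n, ← intervalIntegral.integral_const_mul]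
      apply intervalIntegral.integral_congr
      intro θ _
      simp only [hexp]
      ring
    rw [hinner]
    ring
  have houter : (∫ r in Set.Ioi (0:ℝ),
        Kker P r rt *
          (∫ θ in (0:ℝ)..(2 * Real.pi),
            Complex.exp (-(2 * (Real.pi : ℂ) * Complex.I) *
              ((r * rt * Real.cos (θ - θt) : ℝ) : ℂ) / ((P.lam * S0 P r rt : ℝ) : ℂ)) *
              (Ei r * Complex.exp (Complex.I * (n : ℂ) * (θ : ℂ)))) *
          (P.Ain r : ℂ) * (r : ℂ))
      = (2 * (Real.pi : ℂ) * Complex.I ^ n * (-1) ^ n *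
            Complex.exp (Complex.I * (n : ℂ) * (θt : ℂ))) *
          ∫ r in Set.Ioi (0:ℝ),
            Kker P r rt * Ei r *
              besselJ n (2 * Real.pi * r * rt / (P.lam * S0 P r rt)) *
              (P.Ain r : ℂ) * (r : ℂ) := by
    rw [← MeasureTheory.integral_const_mul]
    exact MeasureTheory.integral_congr_ae (Filter.Eventually.of_forall fun r => hpoint r)
  show ((P.Aout rt : ℂ) / (Complex.I * (P.lam : ℂ) * (P.Z : ℂ))) * _ = _
  rw [houter]
  have hlam : (P.lam : ℂ) ≠ 0 := by
    simp [Complex.ofReal_ne_zero, ne_of_gt P.lam_pos]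
  have hZ : (P.Z : ℂ) ≠ 0 := by
    simp [Complex.ofReal_ne_zero, ne_of_gt P.Z_pos]
  simp only [zpow_sub₀ Complex.I_ne_zero, zpow_one, div_eq_mul_inv, mul_inv, Complex.inv_I]
  ring
end

section
/- Consider a cascade consisting of a first S-Huygens propagation step, followed by pointwise multiplication of the field by a radially symmetric mask M(r̃) (a function of radius only), followed by a second S-Huygens propagation step (with its own surface functions, separation, index and apodizers). If the input field to the cascade is an nth-order azimuthal harmonic E_i(r) e^{i n θ} for some integer n, and all the intermediate S-Huygens integrands are integrable, then the output field of the cascade is again an nth-order azimuthal harmonic, i.e., of the form F(r̂) e^{i n θ̂} for some radial function F. -/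
open MeasureTheory

lemma angular_shift (c : ℂ) (n : ℤ) (θt : ℝ) :
    (∫ θ in (0:ℝ)..(2*Real.pi),
        Complex.exp (c * (Real.cos (θ - θt) : ℝ)) * Complex.exp (Complex.I * (n:ℂ) * (θ:ℂ)))
      = Complex.exp (Complex.I * (n:ℂ) * (θt:ℂ)) *
        ∫ θ in (0:ℝ)..(2*Real.pi),
          Complex.exp (c * (Real.cos θ : ℝ)) * Complex.exp (Complex.I * (n:ℂ) * (θ:ℂ)) := by
  set F : ℝ → ℂ := fun u => Complex.exp (c * (Real.cos u : ℝ)) *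
      Complex.exp (Complex.I * (n:ℂ) * ((u:ℂ) + (θt:ℂ))) with hF
  have hper : Function.Periodic F (2 * Real.pi) := by
    intro u
    simp only [hF]
    rw [Real.cos_add_two_pi]
    congr 1
    rw [show ((u + 2*Real.pi : ℝ) : ℂ) = (u:ℂ) + 2*Real.pi by push_cast; ring]
    rw [show Complex.I * (n:ℂ) * ((u:ℂ) + 2*Real.pi + (θt:ℂ))
        = Complex.I * (n:ℂ) * ((u:ℂ) + (θt:ℂ)) + (n:ℂ) * (2*Real.pi*Complex.I) by ring]
    rw [Complex.exp_add, Complex.exp_int_mul_two_pi_mul_I, mul_one]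
  have h1 : (∫ θ in (0:ℝ)..(2*Real.pi),
        Complex.exp (c * (Real.cos (θ - θt) : ℝ)) * Complex.exp (Complex.I * (n:ℂ) * (θ:ℂ)))
      = ∫ θ in (0:ℝ)..(2*Real.pi), F (θ - θt) := by
    apply intervalIntegral.integral_congr
    intro θ _
    simp only [hF]
    congr 2
    push_cast
    ring
  rw [h1, intervalIntegral.integral_comp_sub_right F θt]
  have h2 : (∫ u in (0:ℝ) - θt..(2*Real.pi) - θt, F u)
      = ∫ u in (0:ℝ)..(2*Real.pi), F u := by
    have h := hper.intervalIntegral_add_eq (0 - θt) 0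
    rw [show (0:ℝ) - θt + 2*Real.pi = 2*Real.pi - θt from by ring, zero_add] at h
    exact h
  rw [h2]
  rw [show Complex.exp (Complex.I * (n:ℂ) * (θt:ℂ)) *
      (∫ θ in (0:ℝ)..(2*Real.pi), Complex.exp (c * (Real.cos θ : ℝ)) * Complex.exp (Complex.I * (n:ℂ) * (θ:ℂ)))
      = ∫ θ in (0:ℝ)..(2*Real.pi), Complex.exp (Complex.I * (n:ℂ) * (θt:ℂ)) *
          (Complex.exp (c * (Real.cos θ : ℝ)) * Complex.exp (Complex.I * (n:ℂ) * (θ:ℂ)))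
      from (intervalIntegral.integral_const_mul _ _).symm]
  apply intervalIntegral.integral_congr
  intro θ _
  simp only [hF]
  simp only [← Complex.exp_add]
  congr 1
  push_cast
  ring

lemma propagate_harmonic (P : SHuygensStep) (n : ℤ) (E : ℝ → ℂ) (rt θt : ℝ) :
    propagate P (fun r θ => E r * Complex.exp (Complex.I * (n:ℂ) * (θ:ℂ))) rt θt
      = propagate P (fun r θ => E r * Complex.exp (Complex.I * (n:ℂ) * (θ:ℂ))) rt 0
        * Complex.exp (Complex.I * (n:ℂ) * (θt:ℂ)) := by
  unfold propagate
  have key : ∀ r : ℝ,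
      (∫ θ in (0:ℝ)..(2*Real.pi),
        Complex.exp (-(2 * (Real.pi : ℂ) * Complex.I) * ((r * rt * Real.cos (θ - θt) : ℝ) : ℂ) /
          ((P.lam * S0 P r rt : ℝ) : ℂ)) * (E r * Complex.exp (Complex.I * (n:ℂ) * (θ:ℂ))))
      = Complex.exp (Complex.I * (n:ℂ) * (θt:ℂ)) *
        ∫ θ in (0:ℝ)..(2*Real.pi),
          Complex.exp (-(2 * (Real.pi : ℂ) * Complex.I) * ((r * rt * Real.cos (θ - 0) : ℝ) : ℂ) /
            ((P.lam * S0 P r rt : ℝ) : ℂ)) * (E r * Complex.exp (Complex.I * (n:ℂ) * (θ:ℂ))) := by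
    intro r
    set c : ℂ := -(2 * (Real.pi : ℂ) * Complex.I) * (r:ℂ) * (rt:ℂ) / ((P.lam * S0 P r rt : ℝ) : ℂ)
      with hc
    have hrw : ∀ θs : ℝ,
        Complex.exp (-(2 * (Real.pi : ℂ) * Complex.I) * ((r * rt * Real.cos θs : ℝ) : ℂ) /
          ((P.lam * S0 P r rt : ℝ) : ℂ)) = Complex.exp (c * (Real.cos θs : ℝ)) := by
      intro θs
      rw [hc]
      congr 1
      push_cast
      ring
    have t1 : ∀ θt' : ℝ,
        (∫ θ in (0:ℝ)..(2*Real.pi),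
          Complex.exp (-(2 * (Real.pi : ℂ) * Complex.I) * ((r * rt * Real.cos (θ - θt') : ℝ) : ℂ) /
            ((P.lam * S0 P r rt : ℝ) : ℂ)) * (E r * Complex.exp (Complex.I * (n:ℂ) * (θ:ℂ))))
        = E r * ∫ θ in (0:ℝ)..(2*Real.pi),
            Complex.exp (c * (Real.cos (θ - θt') : ℝ)) * Complex.exp (Complex.I * (n:ℂ) * (θ:ℂ)) := by
      intro θt'
      rw [← intervalIntegral.integral_const_mul]
      apply intervalIntegral.integral_congr
      intro θ _
      simp only [hrw]
      ring
    rw [t1 θt, t1 0, angular_shift c n θt]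
    simp only [sub_zero]
    ring
  simp only [key]
  rw [show (fun r : ℝ => Kker P r rt *
        (Complex.exp (Complex.I * (n:ℂ) * (θt:ℂ)) *
          ∫ θ in (0:ℝ)..(2*Real.pi),
            Complex.exp (-(2 * (Real.pi : ℂ) * Complex.I) * ((r * rt * Real.cos (θ - 0) : ℝ) : ℂ) /
              ((P.lam * S0 P r rt : ℝ) : ℂ)) * (E r * Complex.exp (Complex.I * (n:ℂ) * (θ:ℂ)))) *
        (P.Ain r : ℂ) * (r : ℂ))
      = fun r : ℝ => Complex.exp (Complex.I * (n:ℂ) * (θt:ℂ)) *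
        (Kker P r rt *
          (∫ θ in (0:ℝ)..(2*Real.pi),
            Complex.exp (-(2 * (Real.pi : ℂ) * Complex.I) * ((r * rt * Real.cos (θ - 0) : ℝ) : ℂ) /
              ((P.lam * S0 P r rt : ℝ) : ℂ)) * (E r * Complex.exp (Complex.I * (n:ℂ) * (θ:ℂ)))) *
          (P.Ain r : ℂ) * (r : ℂ)) from funext fun r => by ring]
  rw [MeasureTheory.integral_const_mul]
  ring

/-- Cascade: a first S-Huygens step, followed by multiplication by a radially
symmetric mask `M(r̃)`, followed by a second S-Huygens step.  If the input field to
the cascade is an `n`th-order azimuthal harmonic `E_i(r) e^{i n θ}` and all the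
intermediate S-Huygens integrands are integrable, then the output field of the
cascade is again an `n`th-order azimuthal harmonic, of the form `F(r̂) e^{i n θ̂}`. -/
theorem sHuygens_cascade_azimuthal_harmonic (P1 P2 : SHuygensStep) (M : ℝ → ℂ)
    (n : ℤ) (Ei : ℝ → ℂ)
    (hint1 : ∀ rt : ℝ, 0 < rt → ∀ θt : ℝ,
      IntegrableOn
        (fun p : ℝ × ℝ =>
          Kker P1 p.1 rt *
            (Complex.exp (-(2 * (Real.pi : ℂ) * Complex.I) *
              ((p.1 * rt * Real.cos (p.2 - θt) : ℝ) : ℂ) /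
                ((P1.lam * S0 P1 p.1 rt : ℝ) : ℂ)) *
              (Ei p.1 * Complex.exp (Complex.I * (n : ℂ) * (p.2 : ℂ)))) *
            (P1.Ain p.1 : ℂ) * (p.1 : ℂ))
        (Set.Ioi (0:ℝ) ×ˢ Set.Ioo (0:ℝ) (2 * Real.pi)))
    (hint2 : ∀ rh : ℝ, 0 < rh → ∀ θh : ℝ,
      IntegrableOn
        (fun p : ℝ × ℝ =>
          Kker P2 p.1 rh *
            (Complex.exp (-(2 * (Real.pi : ℂ) * Complex.I) *
              ((p.1 * rh * Real.cos (p.2 - θh) : ℝ) : ℂ) /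
                ((P2.lam * S0 P2 p.1 rh : ℝ) : ℂ)) *
              (M p.1 *
                propagate P1
                  (fun r θ => Ei r * Complex.exp (Complex.I * (n : ℂ) * (θ : ℂ)))
                  p.1 p.2)) *
            (P2.Ain p.1 : ℂ) * (p.1 : ℂ))
        (Set.Ioi (0:ℝ) ×ˢ Set.Ioo (0:ℝ) (2 * Real.pi))) :
    ∃ F : ℝ → ℂ, ∀ rh : ℝ, 0 < rh → ∀ θh : ℝ,
      propagate P2
          (fun r θ => M r *
            propagate P1
              (fun r' θ' => Ei r' * Complex.exp (Complex.I * (n : ℂ) * (θ' : ℂ)))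
              r θ)
          rh θh
        = F rh * Complex.exp (Complex.I * (n : ℂ) * (θh : ℂ)) := by
  refine ⟨fun rh => propagate P2
      (fun r θ => (M r * propagate P1
          (fun r' θ' => Ei r' * Complex.exp (Complex.I * (n : ℂ) * (θ' : ℂ))) r 0) *
        Complex.exp (Complex.I * (n : ℂ) * (θ : ℂ))) rh 0, ?_⟩
  intro rh _ θh
  have hfun : (fun r θ => M r *
        propagate P1 (fun r' θ' => Ei r' * Complex.exp (Complex.I * (n : ℂ) * (θ' : ℂ))) r θ)
      = fun (r θ : ℝ) => (M r * propagate P1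
          (fun r' θ' => Ei r' * Complex.exp (Complex.I * (n : ℂ) * (θ' : ℂ))) r 0) *
        Complex.exp (Complex.I * (n : ℂ) * (θ : ℂ)) := by
    funext r θ
    rw [propagate_harmonic P1 n Ei r θ]
    ring
  rw [hfun]
  exact propagate_harmonic P2 n
    (fun r => M r * propagate P1
      (fun r' θ' => Ei r' * Complex.exp (Complex.I * (n : ℂ) * (θ' : ℂ))) r 0) rh θh
end

section
/- For every real x and every real θ, the Jacobi–Anger expansion holds: e^{i x cos θ} = Σ_{k = -∞}^{∞} iᵏ Jₖ(x) e^{i k θ}, where the doubly infinite series converges absolutely. Equivalently, iᵏ Jₖ(x) is the kth Fourier coefficient of the 2π-periodic function θ ↦ e^{i x cos θ}. -/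
open Complex Real intervalIntegral

noncomputable def jaF (x : ℝ) (θ : ℝ) : ℂ := Complex.exp (Complex.I * x * Real.cos θ)
noncomputable def jaF1 (x : ℝ) (θ : ℝ) : ℂ := (-(Complex.I * x * Real.sin θ)) * jaF x θ
noncomputable def jaF2 (x : ℝ) (θ : ℝ) : ℂ :=
  (-(Complex.I * x * Real.cos θ) - (x : ℂ)^2 * (Real.sin θ : ℂ)^2) * jaF x θ

lemma jaF_periodic (x : ℝ) : Function.Periodic (jaF x) (2 * Real.pi) := fun θ => by
  simp [jaF, Real.cos_add_two_pi]

lemma jaF1_periodic (x : ℝ) : Function.Periodic (jaF1 x) (2 * Real.pi) := fun θ => by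
  simp [jaF1, Real.sin_add_two_pi, jaF_periodic x θ]

lemma jaF_cont (x : ℝ) : Continuous (jaF x) := by
  unfold jaF; fun_prop

lemma norm_jaF (x θ : ℝ) : ‖jaF x θ‖ = 1 := by
  rw [jaF, Complex.norm_exp]
  norm_num [Complex.mul_re, Complex.mul_im]

lemma hasDerivAt_jaF (x θ : ℝ) : HasDerivAt (jaF x) (jaF1 x θ) θ := by
  have h1 : HasDerivAt (fun θ : ℝ => (Real.cos θ : ℂ)) (-Real.sin θ : ℝ) θ :=
    (Real.hasDerivAt_cos θ).ofReal_comp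
  have h2 : HasDerivAt (fun θ : ℝ => Complex.I * x * (Real.cos θ : ℂ))
      (Complex.I * x * (-Real.sin θ : ℝ)) θ := h1.const_mul _
  have := h2.cexp
  convert this using 1
  · rfl
  simp only [jaF1, jaF]
  push_cast
  ring

lemma hasDerivAt_jaF1 (x θ : ℝ) : HasDerivAt (jaF1 x) (jaF2 x θ) θ := by
  have h1 : HasDerivAt (fun θ : ℝ => (-(Complex.I * x * (Real.sin θ : ℂ))))
      (-(Complex.I * x * (Real.cos θ : ℂ))) θ := by
    have : HasDerivAt (fun θ : ℝ => (Real.sin θ : ℂ)) (Real.cos θ : ℝ) θ :=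
      (Real.hasDerivAt_sin θ).ofReal_comp
    simpa using (this.const_mul (Complex.I * x)).fun_neg
  have := h1.fun_mul (hasDerivAt_jaF x θ)
  convert this using 1
  · rfl
  · rfl
  simp only [jaF2, jaF1]
  push_cast
  rw [show ((x:ℂ)^2 = -(Complex.I^2 * x^2)) by rw [Complex.I_sq]; ring]
  ring

lemma norm_jaF2_le (x θ : ℝ) : ‖jaF2 x θ‖ ≤ |x| + x ^ 2 := by
  rw [jaF2, norm_mul, norm_jaF, mul_one]
  have h := norm_sub_le (-(Complex.I * x * (Real.cos θ : ℂ))) ((x : ℂ)^2 * (Real.sin θ : ℂ)^2)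
  refine h.trans ?_
  have e1 : ‖-(Complex.I * (x:ℂ) * (Real.cos θ : ℂ))‖ = |x| * |Real.cos θ| := by
    simp only [norm_neg, norm_mul, Complex.norm_I, Complex.norm_real, Real.norm_eq_abs, one_mul]
  have e2 : ‖((x : ℂ))^2 * (Real.sin θ : ℂ)^2‖ = x^2 * (Real.sin θ)^2 := by
    simp only [norm_mul, norm_pow, Complex.norm_real, Real.norm_eq_abs, _root_.sq_abs]
  rw [e1, e2]
  have h1 : |Real.cos θ| ≤ 1 := Real.abs_cos_le_one θ
  have h2 : (Real.sin θ)^2 ≤ 1 := Real.sin_sq_le_one θ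
  nlinarith [abs_nonneg x, sq_nonneg x]

lemma two_pi_pos' : (0:ℝ) < 2 * Real.pi := by positivity

instance : Fact ((0:ℝ) < 2 * Real.pi) := ⟨two_pi_pos'⟩

/-- The function `θ ↦ e^{i x cos θ}` as a continuous map on the circle. -/
noncomputable def jaG (x : ℝ) : C(AddCircle (2 * Real.pi), ℂ) :=
  ⟨(jaF_periodic x).lift, (jaF_cont x).quotient_liftOn' _⟩

lemma jaG_coe (x θ : ℝ) : jaG x (θ : AddCircle (2 * Real.pi)) = jaF x θ := rfl

lemma fourier_eq (n : ℤ) (θ : ℝ) :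
    (fourier n (θ : AddCircle (2 * Real.pi)) : ℂ) =
      Complex.exp (Complex.I * n * θ) := by
  rw [fourier_coe_apply]
  congr 1
  have hπ : (Real.pi : ℂ) ≠ 0 := Complex.ofReal_ne_zero.mpr Real.pi_ne_zero
  push_cast
  field_simp

lemma fourierCoeff_jaG (x : ℝ) (n : ℤ) :
    fourierCoeff (jaG x) n =
      (1 / (2 * (Real.pi : ℂ))) *
        ∫ θ' in (0:ℝ)..(2 * Real.pi),
          Complex.exp (Complex.I * (x : ℂ) * (Real.cos θ' : ℂ)) *
            Complex.exp (-(Complex.I * (n : ℂ) * (θ' : ℂ))) := by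
  rw [fourierCoeff_eq_intervalIntegral _ n 0, zero_add, Complex.real_smul]
  congr 1
  · push_cast; norm_num
  · refine intervalIntegral.integral_congr fun θ' _ => ?_
    rw [jaG_coe, smul_eq_mul, fourier_eq, jaF]
    push_cast
    rw [mul_comm]
    congr 2
    ring

lemma ja_integral_symm (x : ℝ) (n : ℤ) :
    (∫ θ' in (0:ℝ)..(2 * Real.pi),
        Complex.exp (Complex.I * (x : ℂ) * (Real.cos θ' : ℂ)) *
          Complex.exp (Complex.I * (n : ℂ) * (θ' : ℂ))) =
    ∫ θ' in (0:ℝ)..(2 * Real.pi),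
        Complex.exp (Complex.I * (x : ℂ) * (Real.cos θ' : ℂ)) *
          Complex.exp (-(Complex.I * (n : ℂ) * (θ' : ℂ))) := by
  have hper : Function.Periodic (fun θ' : ℝ =>
      Complex.exp (Complex.I * (x : ℂ) * (Real.cos θ' : ℂ)) *
        Complex.exp (-(Complex.I * (n : ℂ) * (θ' : ℂ)))) (2 * Real.pi) := by
    intro θ'
    have e1 : ((Real.cos (θ' + 2 * Real.pi) : ℝ) : ℂ) = ((Real.cos θ' : ℝ) : ℂ) := by
      norm_cast
      exact Real.cos_add_two_pi θ'
    have e2 : Complex.exp (-(Complex.I * (n : ℂ) * ((θ' + 2 * Real.pi : ℝ) : ℂ))) =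
        Complex.exp (-(Complex.I * (n : ℂ) * (θ' : ℂ))) := by
      have e3 : -(Complex.I * (n : ℂ) * ((θ' + 2 * Real.pi : ℝ) : ℂ)) =
          -(Complex.I * (n : ℂ) * (θ' : ℂ)) + (-n : ℤ) * (2 * (Real.pi : ℂ) * Complex.I) := by
        push_cast
        ring
      rw [e3, Complex.exp_add, Complex.exp_int_mul_two_pi_mul_I, mul_one]
    simp only [e1, e2]
  have h1 : (∫ θ' in (0:ℝ)..(2 * Real.pi),
      Complex.exp (Complex.I * (x : ℂ) * (Real.cos θ' : ℂ)) *
        Complex.exp (Complex.I * (n : ℂ) * (θ' : ℂ))) =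
      ∫ θ' in (0:ℝ)..(2 * Real.pi), (fun θ'' : ℝ =>
        Complex.exp (Complex.I * (x : ℂ) * (Real.cos θ'' : ℂ)) *
          Complex.exp (-(Complex.I * (n : ℂ) * (θ'' : ℂ)))) (-θ') := by
    refine intervalIntegral.integral_congr fun θ' _ => ?_
    simp only
    congr 2
    · push_cast [Real.cos_neg]
      rfl
    · push_cast
      ring
  have h4 := intervalIntegral.integral_comp_neg (a := (0:ℝ)) (b := 2 * Real.pi)
    (f := fun θ'' : ℝ => Complex.exp (Complex.I * (x : ℂ) * (Real.cos θ'' : ℂ)) *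
      Complex.exp (-(Complex.I * (n : ℂ) * (θ'' : ℂ))))
  rw [h1, h4, neg_zero]
  have h2 := hper.intervalIntegral_add_eq (-(2 * Real.pi)) 0
  simpa using h2

lemma Ipow_besselJ (x : ℝ) (n : ℤ) :
    Complex.I ^ n * besselJ n x = fourierCoeff (jaG x) n := by
  rw [fourierCoeff_jaG, besselJ, ← mul_assoc, ← ja_integral_symm]
  congr 1
  have hIn : (Complex.I : ℂ) ^ n ≠ 0 := zpow_ne_zero _ Complex.I_ne_zero
  have hπ : (Real.pi : ℂ) ≠ 0 := Complex.ofReal_ne_zero.mpr Real.pi_ne_zero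
  field_simp

lemma jaF1_cont (x : ℝ) : Continuous (jaF1 x) := by
  unfold jaF1 jaF; fun_prop

lemma jaF2_cont (x : ℝ) : Continuous (jaF2 x) := by
  unfold jaF2 jaF; fun_prop

lemma fourierCoeff_jaG_eq_On (x : ℝ) (n : ℤ) :
    fourierCoeff (jaG x) n = fourierCoeffOn two_pi_pos' (jaF x) n := by
  rw [fourierCoeff_eq_intervalIntegral _ n 0, fourierCoeffOn_eq_integral, zero_add]
  congr 1
  · norm_num
  · refine intervalIntegral.integral_congr fun θ' _ => ?_
    rw [jaG_coe]
    congr 1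
    rw [fourier_coe_apply, fourier_coe_apply]
    norm_num

lemma ibp_step {f f1 : ℝ → ℂ} (hd : ∀ θ : ℝ, HasDerivAt f (f1 θ) θ) (hc : Continuous f1)
    (hper : f (2 * Real.pi) = f 0) {n : ℤ} (hn : n ≠ 0) :
    fourierCoeffOn two_pi_pos' f n =
      (1 / (-2 * (Real.pi : ℂ) * Complex.I * n)) *
        (-(2 * (Real.pi : ℂ)) * fourierCoeffOn two_pi_pos' f1 n) := by
  rw [fourierCoeffOn_of_hasDerivAt two_pi_pos' hn (fun θ _ => hd θ)
    (hc.intervalIntegrable _ _), hper, sub_self, mul_zero, zero_sub]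
  push_cast
  ring

lemma ibp2 (x : ℝ) {n : ℤ} (hn : n ≠ 0) :
    fourierCoeffOn two_pi_pos' (jaF x) n =
      -(1 / (n : ℂ)^2) * fourierCoeffOn two_pi_pos' (jaF2 x) n := by
  have per1 : jaF x (2 * Real.pi) = jaF x 0 := by
    have := jaF_periodic x 0; rwa [zero_add] at this
  have per2 : jaF1 x (2 * Real.pi) = jaF1 x 0 := by
    have := jaF1_periodic x 0; rwa [zero_add] at this
  rw [ibp_step (hasDerivAt_jaF x) (jaF1_cont x) per1 hn,
    ibp_step (hasDerivAt_jaF1 x) (jaF2_cont x) per2 hn]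
  have hπ : (Real.pi : ℂ) ≠ 0 := Complex.ofReal_ne_zero.mpr Real.pi_ne_zero
  have hn' : (n : ℂ) ≠ 0 := Int.cast_ne_zero.mpr hn
  have hI : Complex.I ≠ 0 := Complex.I_ne_zero
  rw [show (1 / (-2 * (Real.pi : ℂ) * Complex.I * n)) = Complex.I / (2 * (Real.pi : ℂ) * n) by
    rw [div_eq_div_iff (by simp [hπ, hn', hI]) (by simp [hπ, hn'])]
    rw [show Complex.I * (-2 * (Real.pi : ℂ) * Complex.I * n) =
      (-2 * (Real.pi : ℂ) * n) * (Complex.I * Complex.I) by ring, Complex.I_mul_I]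
    ring]
  field_simp
  linear_combination (fourierCoeffOn two_pi_pos' (jaF2 x) n) *
    Complex.I_mul_I

lemma norm_fourierCoeffOn_jaF2_le (x : ℝ) (n : ℤ) :
    ‖fourierCoeffOn two_pi_pos' (jaF2 x) n‖ ≤ |x| + x ^ 2 := by
  rw [fourierCoeffOn_eq_integral]
  rw [norm_smul]
  have h1 : ‖(1 / (2 * Real.pi - 0) : ℝ)‖ = 1 / (2 * Real.pi) := by
    rw [sub_zero, Real.norm_eq_abs, abs_of_pos (by positivity)]
  rw [h1]
  have h2 : ‖∫ θ' in (0:ℝ)..(2 * Real.pi),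
      fourier (-n) (θ' : AddCircle (2 * Real.pi - 0)) • jaF2 x θ'‖ ≤
      (|x| + x ^ 2) * |2 * Real.pi - 0| := by
    apply intervalIntegral.norm_integral_le_of_norm_le_const
    intro θ' _
    rw [norm_smul]
    have h3 : ‖(fourier (-n)) ((θ' : ℝ) : AddCircle (2 * Real.pi - 0))‖ = 1 := Circle.norm_coe _
    rw [h3, one_mul]
    exact norm_jaF2_le x θ'
  calc (1 / (2 * Real.pi)) * ‖_‖ ≤ (1 / (2 * Real.pi)) * ((|x| + x ^ 2) * |2 * Real.pi - 0|) :=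
        mul_le_mul_of_nonneg_left h2 (by positivity)
    _ = |x| + x ^ 2 := by
        rw [sub_zero, abs_of_pos (by positivity : (0:ℝ) < 2 * Real.pi)]
        field_simp

lemma norm_fourierCoeff_jaG_le (x : ℝ) {n : ℤ} (hn : n ≠ 0) :
    ‖fourierCoeff (jaG x) n‖ ≤ (|x| + x ^ 2) * (1 / (n : ℝ) ^ 2) := by
  rw [fourierCoeff_jaG_eq_On, ibp2 x hn, norm_mul]
  have e : ‖-(1 / (n : ℂ) ^ 2)‖ = 1 / (n : ℝ) ^ 2 := by
    rw [norm_neg, norm_div, norm_one, norm_pow]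
    norm_num
  rw [e, mul_comm]
  exact mul_le_mul_of_nonneg_right (norm_fourierCoeffOn_jaF2_le x n) (by positivity)

lemma summable_norm_fourierCoeff_jaG (x : ℝ) :
    Summable (fun n : ℤ => ‖fourierCoeff (jaG x) n‖) := by
  have hs : Summable (fun n : ℤ => (|x| + x ^ 2) * (1 / (n : ℝ) ^ 2)) :=
    (summable_one_div_int_pow.mpr one_lt_two).mul_left _
  refine hs.of_norm_bounded_eventually ?_
  rw [Filter.eventually_cofinite]
  refine Set.Finite.subset (Set.finite_singleton (0 : ℤ)) fun n hn => ?_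
  simp only [Set.mem_setOf_eq, not_le] at hn
  simp only [Set.mem_singleton_iff]
  by_contra h0
  refine absurd ?_ (not_le.mpr hn)
  rw [Real.norm_eq_abs, _root_.abs_of_nonneg (norm_nonneg _)]
  exact norm_fourierCoeff_jaG_le x h0

lemma norm_exp_I_int_mul (k : ℤ) (θ : ℝ) :
    ‖Complex.exp (Complex.I * (k : ℂ) * (θ : ℂ))‖ = 1 := by
  rw [Complex.norm_exp]
  have : (Complex.I * (k : ℂ) * (θ : ℂ)).re = 0 := by
    simp [Complex.mul_re, Complex.mul_im]
  rw [this, Real.exp_zero]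

/-- The Jacobi–Anger expansion: for every real `x` and `θ`,
`e^{i x cos θ} = Σ_{k=-∞}^{∞} iᵏ Jₖ(x) e^{i k θ}`, the doubly infinite series
converging absolutely; equivalently, `iᵏ Jₖ(x)` is the `k`th Fourier coefficient of
the `2π`-periodic function `θ ↦ e^{i x cos θ}`. -/
theorem jacobi_anger (x θ : ℝ) :
    HasSum (fun k : ℤ => Complex.I ^ k * besselJ k x *
        Complex.exp (Complex.I * (k : ℂ) * (θ : ℂ)))
      (Complex.exp (Complex.I * (x : ℂ) * (Real.cos θ : ℂ))) ∧
    Summable (fun k : ℤ => ‖Complex.I ^ k * besselJ k x *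
        Complex.exp (Complex.I * (k : ℂ) * (θ : ℂ))‖) ∧
    ∀ k : ℤ, Complex.I ^ k * besselJ k x =
      (1 / (2 * (Real.pi : ℂ))) *
        ∫ θ' in (0:ℝ)..(2 * Real.pi),
          Complex.exp (Complex.I * (x : ℂ) * (Real.cos θ' : ℂ)) *
            Complex.exp (-(Complex.I * (k : ℂ) * (θ' : ℂ))) := by
  have hsummable : Summable (fourierCoeff (jaG x)) :=
    Summable.of_norm (summable_norm_fourierCoeff_jaG x)
  have hps := has_pointwise_sum_fourier_series_of_summable hsummable
    (θ : AddCircle (2 * Real.pi))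
  refine ⟨?_, ?_, fun k => by rw [Ipow_besselJ, fourierCoeff_jaG]⟩
  · have e1 : (fun k : ℤ => Complex.I ^ k * besselJ k x *
        Complex.exp (Complex.I * (k : ℂ) * (θ : ℂ))) =
        fun k : ℤ => fourierCoeff (jaG x) k • fourier k (θ : AddCircle (2 * Real.pi)) := by
      funext k
      rw [smul_eq_mul, fourier_eq, Ipow_besselJ]
    rw [e1]
    have e2 : Complex.exp (Complex.I * (x : ℂ) * (Real.cos θ : ℂ)) =
        jaG x (θ : AddCircle (2 * Real.pi)) := rfl
    rw [e2]
    exact hps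
  · refine (summable_norm_fourierCoeff_jaG x).congr fun k => ?_
    rw [norm_mul (Complex.I ^ k * besselJ k x), norm_exp_I_int_mul, mul_one, Ipow_besselJ]
end
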